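/- The entry/body-labeled 1-LTS L̂1(StExp^(*)(A)) generated by the marked TSS T̲̂^(*)(A) is an entry/body-labeling of the stacked star expressions 1-LTS L1(StExp^(*)(A)), and it is a LLEE-witness of L1(StExp^(*)(A)), i.e., it satisfies conditions (W1), (W2) and (W3). -/

import Mathlib

universe u v w

/-- Star expressions over a set `A` of actions. -/
inductive StExp (A : Type u) : Type u
  | zero : StExp A
  | one : StExp A
  | act : A → StExp A
  | add : StExp A → StExp A → StExp A
  | mul : StExp A → StExp A → StExp A
  | star : StExp A → StExp A

namespace StExp

variable {A : Type u}

/-- Immediate termination in Milner's TSS `T(A)`. -/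
inductive Term : StExp A → Prop
  | one : Term StExp.one
  | addL {e₁ e₂ : StExp A} : Term e₁ → Term (StExp.add e₁ e₂)
  | addR {e₁ e₂ : StExp A} : Term e₂ → Term (StExp.add e₁ e₂)
  | mul {e₁ e₂ : StExp A} : Term e₁ → Term e₂ → Term (StExp.mul e₁ e₂)
  | star {e : StExp A} : Term (StExp.star e)

/-- Transitions in Milner's TSS `T(A)`. -/
inductive Step : StExp A → A → StExp A → Prop
  | act {a : A} : Step (StExp.act a) a StExp.one
  | addL {e₁ e₂ e' : StExp A} {a : A} : Step e₁ a e' → Step (StExp.add e₁ e₂) a e'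
  | addR {e₁ e₂ e' : StExp A} {a : A} : Step e₂ a e' → Step (StExp.add e₁ e₂) a e'
  | mulL {e₁ e₂ e₁' : StExp A} {a : A} :
      Step e₁ a e₁' → Step (StExp.mul e₁ e₂) a (StExp.mul e₁' e₂)
  | mulR {e₁ e₂ e₂' : StExp A} {a : A} :
      Term e₁ → Step e₂ a e₂' → Step (StExp.mul e₁ e₂) a e₂'
  | star {e e' : StExp A} {a : A} :
      Step e a e' → Step (StExp.star e) a (StExp.mul e' (StExp.star e))

/-- (Syntactic) star height. -/
def height : StExp A → ℕ
  | .zero => 0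
  | .one => 0
  | .act _ => 0
  | .add e₁ e₂ => max e₁.height e₂.height
  | .mul e₁ e₂ => max e₁.height e₂.height
  | .star e => e.height + 1

end StExp

/-- Stacked star expressions: `E ::= e | E·e | E * e*`. -/
inductive SExp (A : Type u) : Type u
  | up : StExp A → SExp A
  | pr : SExp A → StExp A → SExp A
  | st : SExp A → StExp A → SExp A

namespace SExp

variable {A : Type u}

/-- Projection to star expressions, interpreting `*` as `·`. -/
def proj : SExp A → StExp A
  | .up e => e
  | .pr E e => StExp.mul E.proj e
  | .st E e => StExp.mul E.proj (StExp.star e)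

/-- `E` is a star expression (contains no stacked product `*`). -/
def IsStExp : SExp A → Prop
  | .up _ => True
  | .pr E _ => IsStExp E
  | .st _ _ => False

/-- Star expressions that are not products (canonical arguments of `up`). -/
def UpOk : StExp A → Prop
  | .mul _ _ => False
  | _ => True

/-- Canonical stacked star expressions: products of star expressions are
represented by `pr` rather than by `up` applied to `StExp.mul`. -/
def Canonical : SExp A → Prop
  | .up e => UpOk e
  | .pr E _ => Canonical E
  | .st E _ => Canonical E

/-- Canonical embedding of star expressions into stacked star expressions. -/
def flatUp : StExp A → SExp A
  | .mul e₁ e₂ => SExp.pr (flatUp e₁) e₂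
  | e => SExp.up e

/-- Immediate termination for stacked star expressions (TSS `T̲^(*)(A)`). -/
inductive STerm : SExp A → Prop
  | up {e : StExp A} : StExp.Term e → STerm (SExp.up e)
  | pr {E : SExp A} {e : StExp A} : STerm E → StExp.Term e → STerm (SExp.pr E e)

/-- Transitions of the TSS `T̲^(*)(A)`; labels in `Option A`, where `none`
is the empty-step label `1`. -/
inductive SStep : SExp A → Option A → SExp A → Prop
  | act {a : A} : SStep (SExp.up (StExp.act a)) (some a) (SExp.up StExp.one)
  | addL {e₁ e₂ : StExp A} {a : A} {E' : SExp A} :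
      SStep (SExp.up e₁) (some a) E' → SStep (SExp.up (StExp.add e₁ e₂)) (some a) E'
  | addR {e₁ e₂ : StExp A} {a : A} {E' : SExp A} :
      SStep (SExp.up e₂) (some a) E' → SStep (SExp.up (StExp.add e₁ e₂)) (some a) E'
  | upMulL {e₁ e₂ : StExp A} {l : Option A} {E₁' : SExp A} :
      SStep (SExp.up e₁) l E₁' → SStep (SExp.up (StExp.mul e₁ e₂)) l (SExp.pr E₁' e₂)
  | upMulR {e₁ e₂ : StExp A} {a : A} {E₂' : SExp A} :
      StExp.Term e₁ → SStep (SExp.up e₂) (some a) E₂' →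
      SStep (SExp.up (StExp.mul e₁ e₂)) (some a) E₂'
  | upStar {e : StExp A} {a : A} {E' : SExp A} :
      SStep (SExp.up e) (some a) E' →
      SStep (SExp.up (StExp.star e)) (some a) (SExp.st E' e)
  | prL {E₁ E₁' : SExp A} {e₂ : StExp A} {l : Option A} :
      SStep E₁ l E₁' → SStep (SExp.pr E₁ e₂) l (SExp.pr E₁' e₂)
  | prR {E₁ E₂' : SExp A} {e₂ : StExp A} {a : A} :
      STerm E₁ → SStep (SExp.up e₂) (some a) E₂' → SStep (SExp.pr E₁ e₂) (some a) E₂'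
  | stL {E₁ E₁' : SExp A} {e₂ : StExp A} {l : Option A} :
      SStep E₁ l E₁' → SStep (SExp.st E₁ e₂) l (SExp.st E₁' e₂)
  | stOne {E₁ : SExp A} {e₂ : StExp A} :
      STerm E₁ → SStep (SExp.st E₁ e₂) none (SExp.up (StExp.star e₂))

/-- `1`-transition. -/
def OneStep (E F : SExp A) : Prop := SStep E none F

/-- Transition with an arbitrary label in `A ∪ {1}`. -/
def AStep (E F : SExp A) : Prop := ∃ l, SStep E l F

/-- Induced (proper) transition `E ⇒a E'`: a sequence of `1`-transitions
followed by an `a`-transition. -/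
def IStep (E : SExp A) (a : A) (E' : SExp A) : Prop :=
  ∃ F, Relation.ReflTransGen OneStep E F ∧ SStep F (some a) E'

/-- Induced termination `E ↓(1)`: a sequence of `1`-transitions ending in a
terminating expression. -/
def ITerm (E : SExp A) : Prop :=
  ∃ F, Relation.ReflTransGen OneStep E F ∧ STerm F

/-- `E` is normed: a path to an expression with immediate termination. -/
def Normed (E : SExp A) : Prop :=
  ∃ F, Relation.ReflTransGen AStep E F ∧ STerm F

/-- `E` is normed⁺: a nonempty sequence of induced transitions to an
expression with induced termination. -/
def NormedP (E : SExp A) : Prop :=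
  ∃ F, Relation.TransGen (fun X Y => ∃ a : A, IStep X a Y) E F ∧ ITerm F

/-- Induced termination as derived in the extension `T̲ind^(*)(A)`. -/
inductive IndTerm : SExp A → Prop
  | base {E : SExp A} : STerm E → IndTerm E
  | step {E F : SExp A} : SStep E none F → IndTerm F → IndTerm E

/-- Induced transitions as derived in the extension `T̲ind^(*)(A)`. -/
inductive IndStep : SExp A → A → SExp A → Prop
  | base {E E' : SExp A} {a : A} : SStep E (some a) E' → IndStep E a E'
  | step {E F E' : SExp A} {a : A} : SStep E none F → IndStep F a E' → IndStep E a E'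

/-- Marked transitions of the TSS `T̲̂^(*)(A)`: marking label `0` means a body
(`bo`) transition, `n ≥ 1` a loop-entry transition of level `n`. -/
inductive MStep : SExp A → Option A × ℕ → SExp A → Prop
  | act {a : A} : MStep (SExp.up (StExp.act a)) (some a, 0) (SExp.up StExp.one)
  | addL {e₁ e₂ : StExp A} {a : A} {n : ℕ} {E' : SExp A} :
      MStep (SExp.up e₁) (some a, n) E' → MStep (SExp.up (StExp.add e₁ e₂)) (some a, 0) E'
  | addR {e₁ e₂ : StExp A} {a : A} {n : ℕ} {E' : SExp A} :
      MStep (SExp.up e₂) (some a, n) E' → MStep (SExp.up (StExp.add e₁ e₂)) (some a, 0) E'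
  | upMulL {e₁ e₂ : StExp A} {l : Option A × ℕ} {E₁' : SExp A} :
      MStep (SExp.up e₁) l E₁' → MStep (SExp.up (StExp.mul e₁ e₂)) l (SExp.pr E₁' e₂)
  | upMulR {e₁ e₂ : StExp A} {a : A} {n : ℕ} {E₂' : SExp A} :
      StExp.Term e₁ → MStep (SExp.up e₂) (some a, n) E₂' →
      MStep (SExp.up (StExp.mul e₁ e₂)) (some a, 0) E₂'
  | upStarP {e : StExp A} {a : A} {n : ℕ} {E' : SExp A} :
      NormedP (SExp.up e) → MStep (SExp.up e) (some a, n) E' →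
      MStep (SExp.up (StExp.star e)) (some a, e.height + 1) (SExp.st E' e)
  | upStarN {e : StExp A} {a : A} {n : ℕ} {E' : SExp A} :
      ¬ NormedP (SExp.up e) → MStep (SExp.up e) (some a, n) E' →
      MStep (SExp.up (StExp.star e)) (some a, 0) (SExp.st E' e)
  | prL {E₁ E₁' : SExp A} {e₂ : StExp A} {l : Option A × ℕ} :
      MStep E₁ l E₁' → MStep (SExp.pr E₁ e₂) l (SExp.pr E₁' e₂)
  | prR {E₁ E₂' : SExp A} {e₂ : StExp A} {a : A} {n : ℕ} :
      STerm E₁ → MStep (SExp.up e₂) (some a, n) E₂' →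
      MStep (SExp.pr E₁ e₂) (some a, 0) E₂'
  | stL {E₁ E₁' : SExp A} {e₂ : StExp A} {l : Option A × ℕ} :
      MStep E₁ l E₁' → MStep (SExp.st E₁ e₂) l (SExp.st E₁' e₂)
  | stOne {E₁ : SExp A} {e₂ : StExp A} :
      STerm E₁ → MStep (SExp.st E₁ e₂) (none, 0) (SExp.up (StExp.star e₂))

/-- Body transition `→bo`. -/
def BStep (E F : SExp A) : Prop := ∃ l : Option A, MStep E (l, 0) F

/-- Star height of stacked star expressions. -/
def heightS : SExp A → ℕ
  | .up e => e.height
  | .pr E e => max E.heightS e.height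
  | .st E e => max E.heightS (e.height + 1)

end SExp

/-- Applicative contexts of stacked star expressions. -/
inductive AppCtx (A : Type u) : Type u
  | hole : AppCtx A
  | pr : AppCtx A → StExp A → AppCtx A
  | st : AppCtx A → StExp A → AppCtx A

/-- Filling the hole of an applicative context. -/
def AppCtx.fill {A : Type u} : AppCtx A → SExp A → SExp A
  | .hole, E => E
  | .pr C e, E => SExp.pr (C.fill E) e
  | .st C e, E => SExp.st (C.fill E) e

/-- A labeled transition system with termination. -/
structure LTS (S : Type u) (L : Type v) where
  step : S → L → S → Prop
  term : S → Prop

/-- Bisimulation between two LTSs with termination. -/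
def IsBisimulation {S₁ : Type u} {S₂ : Type v} {L : Type w}
    (M₁ : LTS S₁ L) (M₂ : LTS S₂ L) (B : S₁ → S₂ → Prop) : Prop :=
  (∃ s₁ s₂, B s₁ s₂) ∧
  ∀ s₁ s₂, B s₁ s₂ →
    ((∀ a s₁', M₁.step s₁ a s₁' → ∃ s₂', M₂.step s₂ a s₂' ∧ B s₁' s₂') ∧
     (∀ a s₂', M₂.step s₂ a s₂' → ∃ s₁', M₁.step s₁ a s₁' ∧ B s₁' s₂') ∧
     (M₁.term s₁ ↔ M₂.term s₂))

/-- The star expressions LTS `L(StExp(A))`. -/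
def stexpLTS (A : Type u) : LTS (StExp A) A := ⟨StExp.Step, StExp.Term⟩

/-- The induced LTS of the stacked star expressions 1-LTS `L1(StExp^(*)(A))`. -/
def indSExpLTS (A : Type u) : LTS (SExp A) A := ⟨SExp.IStep, SExp.ITerm⟩

/-- A (rooted) chart. -/
structure Chart (V : Type u) (L : Type v) where
  verts : Set V
  start : V
  step : V → L → V → Prop
  term : V → Prop

/-- Bisimulation between two charts: a bisimulation between the underlying
LTSs that relates the start vertices. -/
def IsChartBisim {V₁ : Type u} {V₂ : Type v} {L : Type w}
    (C₁ : Chart V₁ L) (C₂ : Chart V₂ L) (B : V₁ → V₂ → Prop) : Prop :=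
  (∀ x y, B x y → x ∈ C₁.verts ∧ y ∈ C₂.verts) ∧
  B C₁.start C₂.start ∧
  ∀ x y, B x y →
    ((∀ a x', C₁.step x a x' → ∃ y', C₂.step y a y' ∧ B x' y') ∧
     (∀ a y', C₂.step y a y' → ∃ x', C₁.step x a x' ∧ B x' y') ∧
     (C₁.term x ↔ C₂.term y))

def ChartBisimilar {V₁ : Type u} {V₂ : Type v} {L : Type w}
    (C₁ : Chart V₁ L) (C₂ : Chart V₂ L) : Prop :=
  ∃ B, IsChartBisim C₁ C₂ B

/-- Star expressions reachable from `e` in Milner's LTS. -/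
def MReach {A : Type u} (e : StExp A) : Set (StExp A) :=
  {f | Relation.ReflTransGen (fun x y => ∃ a, StExp.Step x a y) e f}

/-- The chart interpretation `C(e)` of a star expression. -/
def chartInt {A : Type u} (e : StExp A) : Chart (StExp A) A where
  verts := MReach e
  start := e
  step x a y := x ∈ MReach e ∧ StExp.Step x a y
  term x := x ∈ MReach e ∧ StExp.Term x

/-- Stacked star expressions reachable from (the canonical representation of)
`e` in the 1-LTS. -/
def SReach {A : Type u} (e : StExp A) : Set (SExp A) :=
  {F | Relation.ReflTransGen SExp.AStep (SExp.flatUp e) F}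

/-- The 1-chart interpretation `C1(e)` of a star expression. -/
def oneChartInt {A : Type u} (e : StExp A) : Chart (SExp A) (Option A) where
  verts := SReach e
  start := SExp.flatUp e
  step x l y := x ∈ SReach e ∧ SExp.SStep x l y
  term x := x ∈ SReach e ∧ SExp.STerm x

/-- The entry/body-labeled 1-chart interpretation `Ĉ1(e)`. -/
def markedOneChartInt {A : Type u} (e : StExp A) : Chart (SExp A) (Option A × ℕ) where
  verts := SReach e
  start := SExp.flatUp e
  step x l y := x ∈ SReach e ∧ SExp.MStep x l y
  term x := x ∈ SReach e ∧ SExp.STerm x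

/-- The induced chart of a 1-chart: induced transitions and induced
termination. -/
def indChart {V : Type u} {A : Type v} (C : Chart V (Option A)) : Chart V A where
  verts := C.verts
  start := C.start
  step x a y := ∃ u, Relation.ReflTransGen (fun s t => C.step s none t) x u ∧ C.step u (some a) y
  term x := ∃ u, Relation.ReflTransGen (fun s t => C.step s none t) x u ∧ C.term u

/-- An infinite path from the start vertex of a chart. -/
def IsInfPathFrom {V : Type u} {L : Type v} (C : Chart V L) (p : ℕ → V) : Prop :=
  p 0 = C.start ∧ ∀ i, ∃ l, C.step (p i) l (p (i + 1))

/-- Loop chart: (L1) an infinite path from the start vertex exists, (L2) every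
infinite path from the start vertex returns to it after a positive number of
transitions, (L3) only the start vertex may terminate. -/
def IsLoopChart {V : Type u} {L : Type v} (C : Chart V L) : Prop :=
  (∃ p, IsInfPathFrom C p) ∧
  (∀ p, IsInfPathFrom C p → ∃ k, 0 < k ∧ p k = C.start) ∧
  (∀ w ∈ C.verts, C.term w → w = C.start)

namespace LLEE

variable {S : Type u} {L : Type v}

/-- Body transition of an entry/body-labeling. -/
def Body (step : S → L × ℕ → S → Prop) (x y : S) : Prop := ∃ l, step x (l, 0) y

/-- Entry transition of level `n` of an entry/body-labeling. -/
def Entry (step : S → L × ℕ → S → Prop) (n : ℕ) (x y : S) : Prop := ∃ l, step x (l, n) y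

/-- Vertices of the induced subchart at `(v, n)`: on paths that start with an
`→[n]` transition from `v`, continue with body transitions, and halt upon
revisiting `v`. -/
def loopVerts (step : S → L × ℕ → S → Prop) (v : S) (n : ℕ) : Set S :=
  insert v {w | ∃ u, Entry step n v u ∧
    Relation.ReflTransGen (fun x y => Body step x y ∧ x ≠ v) u w}

/-- The induced subchart at `(v, n)`. -/
def subchartAt (step : S → L × ℕ → S → Prop) (term : S → Prop) (v : S) (n : ℕ) :
    Chart S (L × ℕ) where
  verts := loopVerts step v n
  start := v
  step x l y :=
    (x = v ∧ l.2 = n ∧ step x l y) ∨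
    (x ∈ loopVerts step v n ∧ x ≠ v ∧ l.2 = 0 ∧ step x l y)
  term x := x ∈ loopVerts step v n ∧ term x

/-- LLEE-witness conditions (W1)–(W3) for an entry/body-labeled transition
system with transitions `step` and termination `term`. -/
def IsWitness (step : S → L × ℕ → S → Prop) (term : S → Prop) : Prop :=
  (¬ ∃ p : ℕ → S, ∀ i, Body step (p i) (p (i + 1))) ∧
  (∀ v n, 0 < n → (∃ w, Entry step n v w) → IsLoopChart (subchartAt step term v n)) ∧
  (∀ v n, 0 < n → (∃ w, Entry step n v w) →
    ∀ t, t ∈ loopVerts step v n → t ≠ v → ∀ m t', 0 < m → Entry step m t t' → m < n)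

end LLEE

namespace LEE

variable {V : Type u} {L : Type v}

/-- Vertices of the subchart generated from `v` by a set `U` of transitions
from `v`: paths start with a transition in `U` and continue (with arbitrary
transitions) until `v` is reached again. -/
def genVerts (C : Chart V L) (v : V) (U : Set (V × L × V)) : Set V :=
  insert v {w | ∃ u, (∃ l, (v, l, u) ∈ U) ∧
    Relation.ReflTransGen (fun x y => (∃ l, C.step x l y) ∧ x ≠ v) u w}

/-- The subchart generated from `v` by the transitions in `U`. -/
def genSubchart (C : Chart V L) (v : V) (U : Set (V × L × V)) : Chart V L where
  verts := genVerts C v U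
  start := v
  step x l y :=
    (x = v ∧ (v, l, y) ∈ U) ∨
    (x ∈ genVerts C v U ∧ x ≠ v ∧ C.step x l y)
  term x := x ∈ genVerts C v U ∧ C.term x

/-- `U` determines a loop subchart of `C` rooted at `v`. -/
def IsLoopSubchart (C : Chart V L) (v : V) (U : Set (V × L × V)) : Prop :=
  v ∈ C.verts ∧ U.Nonempty ∧
  (∀ t ∈ U, t.1 = v ∧ C.step t.1 t.2.1 t.2.2) ∧
  IsLoopChart (genSubchart C v U)

/-- Elimination of the loop-entry transitions in `U`, followed by removal of
all vertices and transitions that become unreachable. -/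
def elim (C : Chart V L) (U : Set (V × L × V)) : Chart V L :=
  let step' : V → L → V → Prop := fun x l y => C.step x l y ∧ (x, l, y) ∉ U
  let R : Set V := {w | Relation.ReflTransGen (fun x y => ∃ l, step' x l y) C.start w}
  { verts := C.verts ∩ R
    start := C.start
    step := fun x l y => step' x l y ∧ x ∈ R ∧ y ∈ R
    term := fun x => C.term x ∧ x ∈ R }

/-- One step of the loop elimination procedure. -/
def ElimStep (C C' : Chart V L) : Prop :=
  ∃ v U, IsLoopSubchart C v U ∧ C' = elim C U

/-- The chart has an infinite path. -/
def HasInfPath (C : Chart V L) : Prop :=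
  ∃ p : ℕ → V, p 0 ∈ C.verts ∧ ∀ i, ∃ l, C.step (p i) l (p (i + 1))

/-- The loop existence and elimination property LEE: repeated elimination of
loop subcharts results in a chart without an infinite path. -/
def SatisfiesLEE (C : Chart V L) : Prop :=
  ∃ C', Relation.ReflTransGen ElimStep C C' ∧ ¬ HasInfPath C'

end LEE

/-- A maximal path of body transitions from `X` in the entry/body-labeled
1-LTS: finite (of length `len`) or infinite (`len = ⊤`), and if finite then
not extensible by any further body transition. -/
structure BoPath (A : Type u) (X : SExp A) where
  len : ℕ∞
  f : ℕ → SExp A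
  head : f 0 = X
  steps : ∀ i : ℕ, (i : ℕ∞) < len → SExp.BStep (f i) (f (i + 1))
  maximal : ∀ n : ℕ, len = (n : ℕ∞) → ∀ Y, ¬ SExp.BStep (f n) Y

/-- Canonical stacked star expressions (the states of the stacked star
expressions 1-LTS `L1(StExp^(*)(A))`). -/
def CSExp (A : Type u) : Type u := {E : SExp A // SExp.Canonical E}

namespace LLEEProof

open SExp StExp Relation

variable {A : Type u}

/-! ### Basic lemmas about marking -/

theorem erase {E : SExp A} {l : Option A × ℕ} {E' : SExp A} (h : SExp.MStep E l E') :
    SExp.SStep E l.1 E' := by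
  induction h with
  | act => exact .act
  | addL _ ih => exact .addL ih
  | addR _ ih => exact .addR ih
  | upMulL _ ih => exact .upMulL ih
  | upMulR h1 _ ih => exact .upMulR h1 ih
  | upStarP _ _ ih => exact .upStar ih
  | upStarN _ _ ih => exact .upStar ih
  | prL _ ih => exact .prL ih
  | prR h1 _ ih => exact .prR h1 ih
  | stL _ ih => exact .stL ih
  | stOne h1 => exact .stOne h1

theorem mark {E : SExp A} {l : Option A} {E' : SExp A} (h : SExp.SStep E l E') :
    ∃ n : ℕ, SExp.MStep E (l, n) E' := by
  induction h with
  | act => exact ⟨0, .act⟩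
  | addL _ ih => obtain ⟨n, h⟩ := ih; exact ⟨0, .addL h⟩
  | addR _ ih => obtain ⟨n, h⟩ := ih; exact ⟨0, .addR h⟩
  | upMulL _ ih => obtain ⟨n, h⟩ := ih; exact ⟨n, .upMulL h⟩
  | upMulR h1 _ ih =>
      obtain ⟨n, h⟩ := ih; exact ⟨0, .upMulR h1 h⟩
  | @upStar e a E' _ ih =>
      obtain ⟨n, h⟩ := ih
      rcases Classical.em (SExp.NormedP (SExp.up e)) with hp | hp
      · exact ⟨e.height + 1, .upStarP hp h⟩
      · exact ⟨0, .upStarN hp h⟩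
  | prL _ ih => obtain ⟨n, h⟩ := ih; exact ⟨n, .prL h⟩
  | prR h1 _ ih => obtain ⟨n, h⟩ := ih; exact ⟨0, .prR h1 h⟩
  | stL _ ih => obtain ⟨n, h⟩ := ih; exact ⟨n, .stL h⟩
  | stOne h1 => exact ⟨0, .stOne h1⟩

/-! ### Height lemmas -/

theorem heightS_step {E : SExp A} {l : Option A × ℕ} {E' : SExp A} (h : SExp.MStep E l E') :
    E'.heightS ≤ E.heightS := by
  induction h <;> (simp only [SExp.heightS, StExp.height] at *; omega)

theorem mark_le_heightS {E : SExp A} {l : Option A} {n : ℕ} {E' : SExp A}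
    (h : SExp.MStep E (l, n) E') : n ≤ E.heightS := by
  generalize hl : (l, n) = lab at h
  induction h generalizing l n with
  | act => cases hl; exact Nat.zero_le _
  | addL _ _ => cases hl; exact Nat.zero_le _
  | addR _ _ => cases hl; exact Nat.zero_le _
  | upMulL _ ih =>
      cases hl
      exact (ih rfl).trans (by simp [SExp.heightS, StExp.height])
  | upMulR _ _ _ => cases hl; exact Nat.zero_le _
  | upStarP _ _ _ => cases hl; simp [SExp.heightS, StExp.height]
  | upStarN _ _ _ => cases hl; exact Nat.zero_le _
  | prL _ ih =>
      cases hl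
      exact (ih rfl).trans (by simp [SExp.heightS])
  | prR _ _ _ => cases hl; exact Nat.zero_le _
  | stL _ ih =>
      cases hl
      exact (ih rfl).trans (by simp [SExp.heightS])
  | stOne _ => cases hl; exact Nat.zero_le _

/-! ### Canonicality -/

theorem canonical_up_step {e : StExp A} {l : Option A × ℕ} {E' : SExp A}
    (h : SExp.MStep (SExp.up e) l E') : SExp.Canonical E' := by
  generalize hE : SExp.up e = E0 at h
  induction h generalizing e with
  | act => trivial
  | addL _ ih => cases hE; exact ih rfl
  | addR _ ih => cases hE; exact ih rfl
  | upMulL _ ih => cases hE; exact ih rfl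
  | upMulR _ _ ih => cases hE; exact ih rfl
  | upStarP _ _ ih => cases hE; exact ih rfl
  | upStarN _ _ ih => cases hE; exact ih rfl
  | prL _ _ => cases hE
  | prR _ _ _ => cases hE
  | stL _ _ => cases hE
  | stOne _ => cases hE

theorem canonical_step {E : SExp A} {l : Option A × ℕ} {E' : SExp A}
    (hc : SExp.Canonical E) (h : SExp.MStep E l E') : SExp.Canonical E' := by
  induction h with
  | act => trivial
  | addL h1 _ => exact canonical_up_step h1
  | addR h1 _ => exact canonical_up_step h1
  | upMulL h1 _ => have := canonical_up_step h1; exact this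
  | upMulR _ h2 _ => exact canonical_up_step h2
  | upStarP _ h2 _ => have := canonical_up_step h2; exact this
  | upStarN _ h2 _ => have := canonical_up_step h2; exact this
  | prL _ ih => exact ih hc
  | prR _ h2 _ => exact canonical_up_step h2
  | stL _ ih => exact ih hc
  | stOne _ => trivial

/-! ### Contexts -/

theorem canonical_fill (C : AppCtx A) (X : SExp A) :
    SExp.Canonical (C.fill X) ↔ SExp.Canonical X := by
  induction C with
  | hole => exact Iff.rfl
  | pr C' e ih => exact ih
  | st C' e ih => exact ih

theorem not_sterm_fill (C : AppCtx A) (F : SExp A) (g : StExp A) :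
    ¬ SExp.STerm (C.fill (SExp.st F g)) := by
  induction C with
  | hole => intro h; cases h
  | pr C' e ih => intro h; cases h with | pr h1 _ => exact ih h1
  | st C' e ih => intro h; cases h

theorem fill_ne_up (C : AppCtx A) (F : SExp A) (g : StExp A) (e : StExp A) :
    C.fill (SExp.st F g) ≠ C.fill (SExp.up e) := by
  induction C with
  | hole => intro h; cases h
  | pr C' e' ih => intro h; injection h with h1 h2; exact ih h1
  | st C' e' ih => intro h; injection h with h1 h2; exact ih h1

theorem fill_up_inj {C₁ C₂ : AppCtx A} {x₁ x₂ : StExp A}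
    (h : C₁.fill (SExp.up x₁) = C₂.fill (SExp.up x₂)) : C₁ = C₂ ∧ x₁ = x₂ := by
  induction C₁ generalizing C₂ with
  | hole =>
      cases C₂ with
      | hole => cases h; exact ⟨rfl, rfl⟩
      | pr C' e => cases h
      | st C' e => cases h
  | pr C' e ih =>
      cases C₂ with
      | hole => cases h
      | pr C'' e' =>
          injection h with h1 h2
          obtain ⟨rfl, rfl⟩ := ih h1
          exact ⟨by rw [h2], rfl⟩
      | st C'' e' => cases h
  | st C' e ih =>
      cases C₂ with
      | hole => cases h
      | pr C'' e' => cases h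
      | st C'' e' =>
          injection h with h1 h2
          obtain ⟨rfl, rfl⟩ := ih h1
          exact ⟨by rw [h2], rfl⟩

theorem lift_step (C : AppCtx A) {X Y : SExp A} {l : Option A × ℕ}
    (h : SExp.MStep X l Y) : SExp.MStep (C.fill X) l (C.fill Y) := by
  induction C with
  | hole => exact h
  | pr C' e ih => exact .prL ih
  | st C' e ih => exact .stL ih

theorem spine (C : AppCtx A) {F : SExp A} {g : StExp A} {lab : Option A × ℕ} {Y : SExp A}
    (h : SExp.MStep (C.fill (SExp.st F g)) lab Y) :
    (∃ F', SExp.MStep F lab F' ∧ Y = C.fill (SExp.st F' g)) ∨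
      (lab = (none, 0) ∧ SExp.STerm F ∧ Y = C.fill (SExp.up (StExp.star g))) := by
  induction C generalizing lab Y with
  | hole =>
      cases h with
      | stL h1 => exact Or.inl ⟨_, h1, rfl⟩
      | stOne h1 => exact Or.inr ⟨rfl, h1, rfl⟩
  | pr C' e ih =>
      cases h with
      | prL h1 =>
          rcases ih h1 with ⟨F', h2, rfl⟩ | ⟨h2, h3, rfl⟩
          · exact Or.inl ⟨F', h2, rfl⟩
          · exact Or.inr ⟨h2, h3, rfl⟩
      | prR h1 _ => exact absurd h1 (not_sterm_fill C' F g)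
  | st C' e ih =>
      cases h with
      | stL h1 =>
          rcases ih h1 with ⟨F', h2, rfl⟩ | ⟨h2, h3, rfl⟩
          · exact Or.inl ⟨F', h2, rfl⟩
          · exact Or.inr ⟨h2, h3, rfl⟩
      | stOne h1 => exact absurd h1 (not_sterm_fill C' F g)

theorem entry_decomp {X W : SExp A} {lab : Option A × ℕ}
    (h : SExp.MStep X lab W) (hn : 0 < lab.2) (hc : SExp.Canonical X) :
    ∃ (C : AppCtx A) (g : StExp A) (E' : SExp A) (m : ℕ),
      X = C.fill (SExp.up (StExp.star g)) ∧ W = C.fill (SExp.st E' g) ∧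
        lab.2 = g.height + 1 ∧ SExp.NormedP (SExp.up g) ∧
        SExp.MStep (SExp.up g) (lab.1, m) E' := by
  induction h with
  | act => exact absurd hn (by simp)
  | addL _ _ => exact absurd hn (by simp)
  | addR _ _ => exact absurd hn (by simp)
  | upMulL _ _ => exact absurd hc (by intro h; exact h)
  | upMulR _ _ _ => exact absurd hn (by simp)
  | @upStarP e a n E' hp h1 _ =>
      exact ⟨.hole, e, E', n, rfl, rfl, rfl, hp, h1⟩
  | upStarN _ _ _ => exact absurd hn (by simp)
  | @prL E₁ E₁' e₂ l h1 ih =>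
      obtain ⟨C, g, E', m, rfl, rfl, h4, h5, h6⟩ := ih hn hc
      exact ⟨.pr C e₂, g, E', m, rfl, rfl, h4, h5, h6⟩
  | prR _ _ _ => exact absurd hn (by simp)
  | @stL E₁ E₁' e₂ l h1 ih =>
      obtain ⟨C, g, E', m, rfl, rfl, h4, h5, h6⟩ := ih hn hc
      exact ⟨.st C e₂, g, E', m, rfl, rfl, h4, h5, h6⟩
  | stOne _ => exact absurd hn (by simp)


/-! ### Induced steps and normedness -/

theorem none_up_aux {E : SExp A} {l : Option A} {E'} (h : SExp.SStep E l E') :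
    l = none → (∃ e, E = SExp.up e) → False := by
  induction h with
  | act => intro hl _; cases hl
  | addL _ _ => intro hl _; cases hl
  | addR _ _ => intro hl _; cases hl
  | upMulL _ ih => intro hl _; exact ih hl ⟨_, rfl⟩
  | upMulR _ _ _ => intro hl _; cases hl
  | upStar _ _ => intro hl _; cases hl
  | prL _ _ => intro _ ⟨e, he⟩; cases he
  | prR _ _ _ => intro _ ⟨e, he⟩; cases he
  | stL _ _ => intro _ ⟨e, he⟩; cases he
  | stOne _ => intro _ ⟨e, he⟩; cases he

theorem none_up {e : StExp A} {E'} (h : SExp.SStep (SExp.up e) none E') : False :=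
  none_up_aux h rfl ⟨e, rfl⟩

theorem istep_head {X Y Z : SExp A} {a : A} (h : SExp.SStep X none Y)
    (h2 : SExp.IStep Y a Z) : SExp.IStep X a Z := by
  obtain ⟨F, hc, hs⟩ := h2
  exact ⟨F, .head h hc, hs⟩

theorem iterm_head {X Y : SExp A} (h : SExp.SStep X none Y) (h2 : SExp.ITerm Y) :
    SExp.ITerm X := by
  obtain ⟨F, hc, ht⟩ := h2
  exact ⟨F, .head h hc, ht⟩

theorem reach_term {X F : SExp A} (h : Relation.ReflTransGen SExp.AStep X F)
    (ht : SExp.STerm F) : SExp.ITerm X ∨ SExp.NormedP X := by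
  induction h using Relation.ReflTransGen.head_induction_on with
  | refl => exact Or.inl ⟨F, .refl, ht⟩
  | head hs hc ih =>
      obtain ⟨l, hs⟩ := hs
      cases l with
      | none =>
          rcases ih with h1 | ⟨G, tg, it⟩
          · exact Or.inl (iterm_head hs h1)
          · refine Or.inr ⟨G, ?_, it⟩
            rcases (Relation.TransGen.head'_iff).mp tg with ⟨b, ⟨a, hab⟩, rest⟩
            exact (Relation.TransGen.head'_iff).mpr ⟨b, ⟨a, istep_head hs hab⟩, rest⟩
      | some a =>
          rcases ih with h1 | ⟨G, tg, it⟩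
          · exact Or.inr ⟨_, .single ⟨a, _, .refl, hs⟩, h1⟩
          · exact Or.inr ⟨G, .head ⟨a, _, .refl, hs⟩ tg, it⟩

theorem normedP_of_step {e : StExp A} {a : A} {E' : SExp A}
    (h : SExp.SStep (SExp.up e) (some a) E') (hn : SExp.Normed E') :
    SExp.NormedP (SExp.up e) := by
  obtain ⟨F, hc, ht⟩ := hn
  rcases reach_term hc ht with h1 | ⟨G, tg, it⟩
  · exact ⟨E', .single ⟨a, _, .refl, h⟩, h1⟩
  · exact ⟨G, .head ⟨a, _, .refl, h⟩ tg, it⟩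

theorem normed_back {X Y : SExp A} {l : Option A} (h : SExp.SStep X l Y)
    (hn : SExp.Normed Y) : SExp.Normed X := by
  obtain ⟨F, hc, ht⟩ := hn
  exact ⟨F, .head ⟨l, h⟩ hc, ht⟩

/-! ### W1: no infinite body path -/

/-- The inverse body-step relation. -/
def Inv (Y X : SExp A) : Prop := SExp.BStep X Y

theorem acc_pr {e₂ : StExp A} (h2 : ∀ l E', SExp.MStep (SExp.up e₂) l E' → Acc Inv E') :
    ∀ E₁ : SExp A, Acc Inv E₁ → Acc Inv (SExp.pr E₁ e₂) := by
  intro E₁ h1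
  induction h1 with
  | intro x h ih =>
      constructor
      intro Y hY
      obtain ⟨l, hm⟩ := hY
      cases hm with
      | prL h1 => exact ih _ ⟨_, h1⟩
      | prR h1 hm2 => exact h2 _ _ hm2

theorem acc_st_neg {e₂ : StExp A} :
    ∀ E₁ : SExp A, Acc Inv E₁ → ¬ SExp.Normed E₁ → Acc Inv (SExp.st E₁ e₂) := by
  intro E₁ h1
  induction h1 with
  | intro x h ih =>
      intro hn
      constructor
      intro Y hY
      obtain ⟨l, hm⟩ := hY
      cases hm with
      | stL h1 =>
          exact ih _ ⟨_, h1⟩ (fun hN => hn (normed_back (erase h1) hN))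
      | stOne h1 => exact absurd ⟨x, .refl, h1⟩ hn

theorem acc_star {e : StExp A} (hM : ∀ l E', SExp.MStep (SExp.up e) l E' → Acc Inv E') :
    Acc Inv (SExp.up (StExp.star e)) := by
  constructor
  intro Y hY
  obtain ⟨l, hm⟩ := hY
  cases hm with
  | upStarN hp h1 =>
      refine acc_st_neg _ (hM _ _ h1) fun hN => hp ?_
      exact normedP_of_step (erase h1) hN

theorem acc_st_full {e₂ : StExp A} (hstar : Acc Inv (SExp.up (StExp.star e₂))) :
    ∀ E₁ : SExp A, Acc Inv E₁ → Acc Inv (SExp.st E₁ e₂) := by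
  intro E₁ h1
  induction h1 with
  | intro x h ih =>
      constructor
      intro Y hY
      obtain ⟨l, hm⟩ := hY
      cases hm with
      | stL h1 => exact ih _ ⟨_, h1⟩
      | stOne h1 => exact hstar

theorem acc_up_all : ∀ e : StExp A, ∀ l E', SExp.MStep (SExp.up e) l E' → Acc Inv E' := by
  intro e
  induction e with
  | zero => intro l E' h; cases h
  | one => intro l E' h; cases h
  | act a =>
      intro l E' h
      cases h
      constructor
      intro Y hY
      obtain ⟨l', hm⟩ := hY
      cases hm
  | add e₁ e₂ ih₁ ih₂ =>
      intro l E' h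
      cases h with
      | addL h1 => exact ih₁ _ _ h1
      | addR h1 => exact ih₂ _ _ h1
  | mul e₁ e₂ ih₁ ih₂ =>
      intro l E' h
      cases h with
      | upMulL h1 => exact acc_pr ih₂ _ (ih₁ _ _ h1)
      | upMulR _ h2 => exact ih₂ _ _ h2
  | star e ih =>
      intro l E' h
      cases h with
      | upStarP _ h1 => exact acc_st_full (acc_star ih) _ (ih _ _ h1)
      | upStarN _ h1 => exact acc_st_full (acc_star ih) _ (ih _ _ h1)

theorem acc_up (e : StExp A) : Acc Inv (SExp.up e) := by
  constructor
  intro Y hY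
  obtain ⟨l, hm⟩ := hY
  exact acc_up_all e _ _ hm

theorem acc_all : ∀ E : SExp A, Acc Inv E := by
  intro E
  induction E with
  | up e => exact acc_up e
  | pr E₁ e₂ ih => exact acc_pr (acc_up_all e₂) _ ih
  | st E₁ e₂ ih => exact acc_st_full (acc_up _) _ ih

theorem no_inf_body : ∀ (X : SExp A), Acc Inv X →
    ∀ p : ℕ → SExp A, p 0 = X → (∀ i, SExp.BStep (p i) (p (i + 1))) → False := by
  intro X hX
  induction hX with
  | intro x h ih =>
      intro p h0 hs
      exact ih (p 1) (h0 ▸ hs 0) (fun i => p (i + 1)) rfl (fun i => hs (i + 1))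


/-! ### Body-normedness -/

theorem exit_body (C : AppCtx A) {g : StExp A} {Y : SExp A} {Z : SExp A}
    (hch : Relation.ReflTransGen SExp.BStep Z Y) (hY : SExp.STerm Y) :
    ∀ F, Z = C.fill (SExp.st F g) →
      Relation.ReflTransGen SExp.BStep (C.fill (SExp.up (StExp.star g))) Y := by
  induction hch using Relation.ReflTransGen.head_induction_on with
  | refl => intro F hF; exact absurd (hF ▸ hY) (not_sterm_fill C F g)
  | head hs hc ih =>
      intro F hF
      subst hF
      obtain ⟨l, hm⟩ := hs
      rcases spine C hm with ⟨F', h2, rfl⟩ | ⟨-, -, rfl⟩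
      · exact ih F' rfl
      · exact hc

theorem body_normed {X F : SExp A} (hch : Relation.ReflTransGen SExp.AStep X F)
    (ht : SExp.STerm F) : SExp.Canonical X →
      ∃ Y, Relation.ReflTransGen SExp.BStep X Y ∧ SExp.STerm Y := by
  induction hch using Relation.ReflTransGen.head_induction_on with
  | refl => intro _; exact ⟨F, .refl, ht⟩
  | head hs hc ih =>
      intro hcX
      obtain ⟨l, hst⟩ := hs
      obtain ⟨n, hm⟩ := mark hst
      have hcZ' := canonical_step hcX hm
      cases n with
      | zero =>
          obtain ⟨Y, ch, hY⟩ := ih hcZ'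
          exact ⟨Y, .head ⟨l, hm⟩ ch, hY⟩
      | succ n =>
          obtain ⟨C, g, E', m, hX, hZ', -, -, -⟩ := entry_decomp hm (Nat.succ_pos n) hcX
          obtain ⟨Y, ch, hY⟩ := ih hcZ'
          exact ⟨Y, hX ▸ exit_body C (hZ' ▸ ch) hY E' rfl, hY⟩

/-! ### Paths as functions -/

theorem rtg_fun {α : Type*} {r : α → α → Prop} {a b : α} (h : Relation.ReflTransGen r a b) :
    ∃ (k : ℕ) (f : ℕ → α), f 0 = a ∧ f k = b ∧ ∀ i < k, r (f i) (f (i + 1)) := by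
  induction h with
  | refl => exact ⟨0, fun _ => a, rfl, rfl, by omega⟩
  | @tail b' c hc hr ih =>
      obtain ⟨k, f, h0, hk, hs⟩ := ih
      refine ⟨k + 1, fun i => if i ≤ k then f i else c, by simp [h0], by simp, ?_⟩
      intro i hi
      rcases Nat.lt_or_ge i k with h1 | h1
      · simp only [if_pos (le_of_lt h1), if_pos (Nat.succ_le_of_lt h1)]
        exact hs i h1
      · have : i = k := by omega
        subst this
        simp only [le_refl, if_pos, if_neg (by omega : ¬ i + 1 ≤ i)]
        exact hk ▸ hr


/-! ### The loop invariant -/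

theorem loop_inv {v u w : CSExp A} {n : ℕ} {C : AppCtx A} {g : StExp A}
    (hv : v.1 = C.fill (SExp.up (StExp.star g)))
    (hu : ∃ l : Option A, SExp.MStep v.1 (l, n) u.1) (hn : 0 < n)
    (chain : Relation.ReflTransGen
      (fun x y : CSExp A => (∃ l : Option A, SExp.MStep x.1 (l, 0) y.1) ∧ x ≠ v) u w) :
    w = v ∨ ∃ F, w.1 = C.fill (SExp.st F g) ∧ F.heightS ≤ g.height := by
  obtain ⟨l0, hm0⟩ := hu
  obtain ⟨C', g', E', m', hv', hu', hgn, -, hms⟩ := entry_decomp hm0 hn v.2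
  obtain ⟨rfl, hg⟩ := fill_up_inj (hv.symm.trans hv')
  cases hg
  induction chain with
  | refl => exact Or.inr ⟨E', hu', heightS_step hms⟩
  | tail hc hstep ih =>
      rcases ih with rfl | ⟨F, hF, hb⟩
      · exact absurd rfl hstep.2
      · obtain ⟨l, hm⟩ := hstep.1
        rw [hF] at hm
        rcases spine C hm with ⟨F', h2, heq⟩ | ⟨-, -, heq⟩
        · exact Or.inr ⟨F', heq, (heightS_step h2).trans hb⟩
        · exact Or.inl (Subtype.ext (heq.trans hv.symm))

theorem entry_decomp_height {v u : CSExp A} {n : ℕ} {C : AppCtx A} {g : StExp A}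
    (hv : v.1 = C.fill (SExp.up (StExp.star g)))
    (hu : ∃ l : Option A, SExp.MStep v.1 (l, n) u.1) (hn : 0 < n) :
    n = g.height + 1 := by
  obtain ⟨l0, hm0⟩ := hu
  obtain ⟨C', g', E', m', hv', hu', hgn, -, hms⟩ := entry_decomp hm0 hn v.2
  obtain ⟨rfl, hg⟩ := fill_up_inj (hv.symm.trans hv')
  cases hg
  exact hgn


theorem ones_astep {X Y : SExp A} (h : Relation.ReflTransGen SExp.OneStep X Y) :
    Relation.ReflTransGen SExp.AStep X Y :=
  Relation.ReflTransGen.mono (r := SExp.OneStep) (p := SExp.AStep) (fun _ _ h => ⟨none, h⟩) X Y h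

theorem istep_astep {X Y : SExp A} {a : A} (h : SExp.IStep X a Y) :
    Relation.ReflTransGen SExp.AStep X Y := by
  obtain ⟨F, ones, hs⟩ := h
  exact (ones_astep ones).tail ⟨some a, hs⟩

theorem ind_chain {X Y : SExp A}
    (h : Relation.ReflTransGen (fun X Y : SExp A => ∃ a : A, SExp.IStep X a Y) X Y) :
    Relation.ReflTransGen SExp.AStep X Y := by
  induction h with
  | refl => exact .refl
  | tail _ hr ih => exact ih.trans (istep_astep hr.choose_spec)


end LLEEProof

/-- The entry/body-labeled 1-LTS `L̂1(StExp^(*)(A))` is an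
entry/body-labeling of the stacked star expressions 1-LTS `L1(StExp^(*)(A))`,
and it is a LLEE-witness of it, i.e., satisfies (W1)–(W3). -/
theorem labeled_oneLTS_is_LLEE_witness (A : Type u) :
    (∀ (E : CSExp A) (l : Option A) (E' : CSExp A),
      SExp.SStep E.1 l E'.1 ↔ ∃ n : ℕ, SExp.MStep E.1 (l, n) E'.1) ∧
    LLEE.IsWitness
      (fun (x : CSExp A) (l : Option A × ℕ) (y : CSExp A) => SExp.MStep x.1 l y.1)
      (fun (x : CSExp A) => SExp.STerm x.1) := by
  classical
  refine ⟨fun E l E' => ⟨fun h => LLEEProof.mark h, fun ⟨n, h⟩ => LLEEProof.erase h⟩,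
    ?_, ?_, ?_⟩
  · -- (W1)
    rintro ⟨p, hp⟩
    exact LLEEProof.no_inf_body _ (LLEEProof.acc_all ((p 0).1)) (fun i => (p i).1) rfl hp
  · -- (W2)
    intro v n hn hw
    obtain ⟨w0, l0, hm0⟩ := hw
    obtain ⟨C, g, E'0, m0, hv, hw0', hgn, hNP, hms0⟩ :=
      LLEEProof.entry_decomp hm0 hn v.2
    refine ⟨?_, ?_, ?_⟩
    · -- (L1): existence of an infinite path
      -- extract the first induced step of a norm-witnessing path from `up g`
      obtain ⟨G, tg, itG⟩ := id hNP
      obtain ⟨b, ⟨a, hab⟩, rest⟩ := Relation.TransGen.head'_iff.mp tg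
      obtain ⟨F0, h1s, h2s⟩ := hab
      have hF0 : SExp.up g = F0 := by
        rcases Relation.ReflTransGen.cases_head h1s with heq | ⟨c, hc, -⟩
        · exact heq
        · exact absurd hc LLEEProof.none_up
      have hstep : SExp.SStep (SExp.up g) (some a) b := hF0 ▸ h2s
      have hNb : SExp.Normed b := by
        obtain ⟨H, ones, htH⟩ := itG
        exact ⟨H, (LLEEProof.ind_chain rest).trans (LLEEProof.ones_astep ones), htH⟩
      obtain ⟨mb, hmb⟩ := LLEEProof.mark hstep
      have hcb : SExp.Canonical b := LLEEProof.canonical_up_step hmb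
      obtain ⟨Fb, hcFb, htFb⟩ := hNb
      obtain ⟨Y, bch, hY⟩ := LLEEProof.body_normed hcFb htFb hcb
      obtain ⟨k, f, hf0, hfk, hfs⟩ := LLEEProof.rtg_fun bch
      have hcf : ∀ i, i ≤ k → SExp.Canonical (f i) := by
        intro i
        induction i with
        | zero => intro _; exact hf0 ▸ hcb
        | succ i ih =>
            intro h
            obtain ⟨l, hm⟩ := hfs i (by omega)
            exact LLEEProof.canonical_step (ih (by omega)) hm
      set q : ℕ → SExp A :=
        fun i => if i = 0 then v.1 else C.fill (SExp.st (f (min (i - 1) k)) g) with hq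
      have hqc : ∀ i, SExp.Canonical (q i) := by
        intro i
        by_cases h : i = 0
        · simpa [hq, h] using v.2
        · simp only [hq, if_neg h]
          exact (LLEEProof.canonical_fill _ _).mpr (hcf _ (min_le_right _ _))
      set wel : ℕ → CSExp A := fun j => ⟨q j, hqc j⟩ with hwel
      set p : ℕ → CSExp A := fun i => wel (i % (k + 2)) with hp
      have hq0 : q 0 = v.1 := by simp [hq]
      have hq1 : ∀ j, q (j + 1) = C.fill (SExp.st (f (min j k)) g) := by
        intro j; simp [hq]
      -- the loop-entry transition from `v`
      have hgn' : n = g.height + 1 := hgn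
      have hE : SExp.MStep v.1 (some a, n) (q 1) := by
        rw [hq1 0, hv, hgn']
        simpa [hf0, Nat.zero_min] using
          LLEEProof.lift_step C (SExp.MStep.upStarP hNP hmb)
      -- the body transitions inside the loop
      have hB : ∀ j, 1 ≤ j → j ≤ k → SExp.BStep (q j) (q (j + 1)) := by
        intro j h1 h2
        obtain ⟨l, hm⟩ := hfs (j - 1) (by omega)
        have hj : j - 1 + 1 = j := by omega
        rw [hj] at hm
        have e1 : q j = C.fill (SExp.st (f (j - 1)) g) := by
          conv_lhs => rw [← hj]
          rw [hq1 (j - 1), Nat.min_eq_left (by omega)]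
        have e2 : q (j + 1) = C.fill (SExp.st (f j) g) := by
          rw [hq1 j, Nat.min_eq_left h2]
        rw [e1, e2]
        exact ⟨l, LLEEProof.lift_step C (SExp.MStep.stL hm)⟩
      have hL : SExp.MStep (q (k + 1)) (none, 0) v.1 := by
        rw [hq1 k, Nat.min_self, hv]
        exact LLEEProof.lift_step C (SExp.MStep.stOne (hfk ▸ hY))
      have hne : ∀ j, 1 ≤ j → wel j ≠ v := by
        intro j h1 hcontra
        have hqj : q j = v.1 := congrArg Subtype.val hcontra
        have hj : j - 1 + 1 = j := by omega
        rw [← hj, hq1 (j - 1), hv] at hqj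
        exact LLEEProof.fill_ne_up C _ g _ hqj
      have hEntry : ∃ l : Option A, SExp.MStep v.1 (l, n) (wel 1).1 := ⟨some a, hE⟩
      have hchain : ∀ j, 1 ≤ j → j ≤ k + 1 →
          Relation.ReflTransGen
            (fun x y : CSExp A => (∃ l : Option A, SExp.MStep x.1 (l, 0) y.1) ∧ x ≠ v)
            (wel 1) (wel j) := by
        intro j
        induction j with
        | zero => omega
        | succ j ih =>
            intro _ h2
            rcases Nat.eq_or_lt_of_le (show 1 ≤ j + 1 from by omega) with h1 | h1
            · rw [← h1]
            · have hj1 : 1 ≤ j := by omega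
              exact (ih hj1 (by omega)).tail ⟨hB j hj1 (by omega), hne j hj1⟩
      have hmem : ∀ j, 1 ≤ j → j ≤ k + 1 → wel j ∈ LLEE.loopVerts
          (fun (x : CSExp A) (l : Option A × ℕ) (y : CSExp A) => SExp.MStep x.1 l y.1) v n := by
        intro j h1 h2
        exact Set.mem_insert_iff.mpr (Or.inr ⟨wel 1, hEntry, hchain j h1 h2⟩)
      refine ⟨p, ?_, ?_⟩
      · show p 0 = v
        exact Subtype.ext (by simp [hp, hwel, hq0])
      intro i
      have hKpos : 0 < (k + 2) := by omega
      have hjlt : i % (k + 2) < (k + 2) := Nat.mod_lt _ hKpos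
      have hsucc : (i + 1) % (k + 2) = (i % (k + 2) + 1) % (k + 2) := by
        conv_lhs => rw [Nat.add_mod, Nat.mod_eq_of_lt (show 1 < (k + 2) by omega)]
      rcases Nat.eq_or_lt_of_le (Nat.zero_le (i % (k + 2))) with hj0 | hj1
      · -- at the start vertex: take the loop-entry transition
        refine ⟨(some a, n), Or.inl ⟨Subtype.ext ?_, rfl, ?_⟩⟩
        · show q (i % (k + 2)) = v.1
          rw [← hj0, hq0]
        · show SExp.MStep (q (i % (k + 2))) (some a, n) (q ((i + 1) % (k + 2)))
          rw [← hj0, hq0, hsucc, ← hj0, Nat.mod_eq_of_lt (show 0 + 1 < (k + 2) by omega)]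
          exact hE
      · rcases Nat.lt_or_ge (i % (k + 2)) (k + 1) with hjk | hjk
        · -- inside the loop: body transition
          obtain ⟨l, hm⟩ := hB (i % (k + 2)) hj1 (by omega)
          refine ⟨(l, 0), Or.inr ⟨hmem _ hj1 (by omega), hne _ hj1, rfl, ?_⟩⟩
          show SExp.MStep (q (i % (k + 2))) (l, 0) (q ((i + 1) % (k + 2)))
          rw [hsucc, Nat.mod_eq_of_lt (show i % (k + 2) + 1 < (k + 2) by omega)]
          exact hm
        · -- last vertex of the loop: return to the start
          have hjeq : i % (k + 2) = k + 1 := by omega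
          refine ⟨(none, 0), Or.inr ⟨hmem _ hj1 (by omega), hne _ hj1, rfl, ?_⟩⟩
          show SExp.MStep (q (i % (k + 2))) (none, 0) (q ((i + 1) % (k + 2)))
          have h0 : (i + 1) % (k + 2) = 0 := by
            rw [hsucc, hjeq]
            exact Nat.mod_self (k + 2)
          rw [h0, hq0, hjeq]
          exact hL
    · -- (L2): every infinite path returns to the start
      intro p hp
      by_contra hcon
      push_neg at hcon
      have hbody : ∀ i, SExp.BStep (p (i + 1)).1 (p (i + 2)).1 := by
        intro i
        obtain ⟨l, hstep⟩ := hp.2 (i + 1)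
        rcases hstep with ⟨heq, -, -⟩ | ⟨-, -, h0, hm⟩
        · exact absurd heq (hcon (i + 1) (by omega))
        · obtain ⟨lo, ln⟩ := l
          cases h0
          exact ⟨lo, hm⟩
      exact LLEEProof.no_inf_body _ (LLEEProof.acc_all ((p 1).1))
        (fun i => (p (i + 1)).1) rfl hbody
    · -- (L3): only the start vertex may terminate
      intro w hwv hwt
      rcases Set.mem_insert_iff.mp hwv with rfl | ⟨u, hu, chain⟩
      · rfl
      · rcases LLEEProof.loop_inv hv hu hn chain with rfl | ⟨F, hF, -⟩
        · rfl
        · exact absurd (hF ▸ hwt.2) (LLEEProof.not_sterm_fill C F g)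
  · -- (W3)
    intro v n hn hw t htmem htv m t' hm hentry
    obtain ⟨w0, l0, hm0⟩ := hw
    obtain ⟨C, g, E'0, m0, hv, hw0', hgn, hNP, hms0⟩ :=
      LLEEProof.entry_decomp hm0 hn v.2
    rcases Set.mem_insert_iff.mp htmem with rfl | ⟨u, hu, chain⟩
    · exact absurd rfl htv
    · rcases LLEEProof.loop_inv hv hu hn chain with rfl | ⟨F, hF, hb⟩
      · exact absurd rfl htv
      · obtain ⟨l, hmt⟩ := hentry
        rw [hF] at hmt
        rcases LLEEProof.spine C hmt with ⟨F', h2, -⟩ | ⟨hlab, -, -⟩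
        · have := LLEEProof.mark_le_heightS h2
          omega
        · injection hlab with h1 h2
          omega
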